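/- Let v_1,…,v_n be unit vectors in ℂ^d, let F(z) = Σ_{(p,q)∈τ} f_{pq} Q_{pq}^{(d)}(z) with f_{pq} ∈ ℂ nonzero exactly for (p,q) ∈ τ, and suppose F(1) = 1 and F(⟨v_j,v_k⟩) = 0 for all j ≠ k. Then n ≤ Σ_{(p,q)∈τ} dim H(p,q). -/

import Mathlib

open MvPolynomial Finset


/-- The complex Gegenbauer (disk) polynomial `Q_{pq}^{(d)}`, as a function of
`z` and `conj z`:
`Q_{pq}^{(d)}(z) = ((p+q+d−1)/(d−1)!) Σ_{j=0}^{min(p,q)} (−1)^j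
  ((d+p+q−j−2)!/(j!(p−j)!(q−j)!)) z^{p−j} conj(z)^{q−j}`. -/
noncomputable def Qc (d p q : ℕ) (z : ℂ) : ℂ :=
  (((p + q + d - 1 : ℕ) : ℂ) / (Nat.factorial (d - 1) : ℂ)) *
    ∑ j ∈ Finset.range (min p q + 1),
      (-1 : ℂ) ^ j *
        ((Nat.factorial (d + p + q - j - 2) : ℂ) /
          ((Nat.factorial j : ℂ) * (Nat.factorial (p - j) : ℂ) *
            (Nat.factorial (q - j) : ℂ))) *
        z ^ (p - j) * ((starRingEnd ℂ) z) ^ (q - j)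

/-- The formal "complex Laplacian" `Σ_i ∂/∂z_i ∂/∂w_i` on polynomials in the variables
`z_1,…,z_d` (the `Sum.inl` variables) and `w_1,…,w_d` (the `Sum.inr` variables,
representing `conj z_1,…,conj z_d`). -/
noncomputable def complexLaplacian (d : ℕ) :
    MvPolynomial (Fin d ⊕ Fin d) ℂ →ₗ[ℂ] MvPolynomial (Fin d ⊕ Fin d) ℂ :=
  ∑ i : Fin d,
    (MvPolynomial.pderiv (Sum.inl i)).toLinearMap ∘ₗ
      (MvPolynomial.pderiv (Sum.inr i)).toLinearMap

/-- `H(p,q)`: harmonic polynomials on `ℂ^d`, homogeneous of degree `p` in `z` and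
degree `q` in `conj z` (the latter modelled by the `Sum.inr` variables). -/
noncomputable def Hpq (d p q : ℕ) : Submodule ℂ (MvPolynomial (Fin d ⊕ Fin d) ℂ) :=
  MvPolynomial.weightedHomogeneousSubmodule ℂ
      (fun i => match i with | Sum.inl _ => 1 | Sum.inr _ => 0) p ⊓
    MvPolynomial.weightedHomogeneousSubmodule ℂ
      (fun i => match i with | Sum.inl _ => 0 | Sum.inr _ => 1) q ⊓
    LinearMap.ker (complexLaplacian d)

namespace ZonalAux

def w1 (d : ℕ) : Fin d ⊕ Fin d → ℕ := fun i => match i with | Sum.inl _ => 1 | Sum.inr _ => 0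
def w2 (d : ℕ) : Fin d ⊕ Fin d → ℕ := fun i => match i with | Sum.inl _ => 0 | Sum.inr _ => 1

variable (d : ℕ) (η : Fin d → ℂ)

noncomputable def U : MvPolynomial (Fin d ⊕ Fin d) ℂ :=
  ∑ i : Fin d, C ((starRingEnd ℂ) (η i)) * X (Sum.inl i)

noncomputable def V : MvPolynomial (Fin d ⊕ Fin d) ℂ :=
  ∑ i : Fin d, C (η i) * X (Sum.inr i)

noncomputable def R : MvPolynomial (Fin d ⊕ Fin d) ℂ :=
  ∑ i : Fin d, X (Sum.inl i) * X (Sum.inr i)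

@[simp] lemma pderiv_inl_U (i : Fin d) : pderiv (Sum.inl i) (U d η) = C ((starRingEnd ℂ) (η i)) := by
  simp [U, pderiv_X, Pi.single_apply, mul_ite, mul_one, mul_zero, Finset.sum_ite_eq]

@[simp] lemma pderiv_inr_U (i : Fin d) : pderiv (Sum.inr i) (U d η) = 0 := by
  simp [U, pderiv_X]

@[simp] lemma pderiv_inr_V (i : Fin d) : pderiv (Sum.inr i) (V d η) = C (η i) := by
  simp [V, pderiv_X, Pi.single_apply, mul_ite, mul_one, mul_zero, Finset.sum_ite_eq]

@[simp] lemma pderiv_inl_V (i : Fin d) : pderiv (Sum.inl i) (V d η) = 0 := by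
  simp [V, pderiv_X]

@[simp] lemma pderiv_inl_R (i : Fin d) : pderiv (Sum.inl i) (R d) = X (Sum.inr i) := by
  simp [R, pderiv_X, Pi.single_apply, mul_ite, mul_one, mul_zero, Finset.sum_ite_eq]

@[simp] lemma pderiv_inr_R (i : Fin d) : pderiv (Sum.inr i) (R d) = X (Sum.inl i) := by
  simp [R, pderiv_X, Pi.single_apply, mul_ite, mul_one, mul_zero, Finset.sum_ite_eq]

lemma complexLaplacian_apply (P : MvPolynomial (Fin d ⊕ Fin d) ℂ) :
    complexLaplacian d P = ∑ i : Fin d, pderiv (Sum.inl i) (pderiv (Sum.inr i) P) := by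
  simp [complexLaplacian]

local notation "Mv" => MvPolynomial (Fin d ⊕ Fin d) ℂ

lemma cast_mul_pow_sub (a : ℕ) (x s : MvPolynomial (Fin d ⊕ Fin d) ℂ) :
    (a : MvPolynomial (Fin d ⊕ Fin d) ℂ) * (x ^ (a - 1) * x * s) = (a : _) * (x ^ a * s) := by
  cases a with
  | zero => simp
  | succ n => rw [Nat.add_sub_cancel, ← pow_succ]

lemma lap_term (hη : (∑ i : Fin d, (starRingEnd ℂ) (η i) * η i) = 1) (j a b : ℕ) :
    complexLaplacian d (R d ^ j * U d η ^ a * V d η ^ b) =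
      ((j * (d + a + b + j - 1) : ℕ) : MvPolynomial (Fin d ⊕ Fin d) ℂ) *
          (R d ^ (j - 1) * U d η ^ a * V d η ^ b) +
        ((a * b : ℕ) : MvPolynomial (Fin d ⊕ Fin d) ℂ) *
          (R d ^ j * U d η ^ (a - 1) * V d η ^ (b - 1)) := by
  have hE : ∀ i : Fin d,
      pderiv (Sum.inl i) (pderiv (Sum.inr i) (R d ^ j * U d η ^ a * V d η ^ b)) =
        ((j : Mv) * ((j - 1 : ℕ) : Mv) * (R d ^ (j - 1 - 1) * U d η ^ a * V d η ^ b)) *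
            (X (Sum.inl i) * X (Sum.inr i)) +
          ((j : Mv) * (a : Mv) * (R d ^ (j - 1) * U d η ^ (a - 1) * V d η ^ b)) *
            (C ((starRingEnd ℂ) (η i)) * X (Sum.inl i)) +
          ((j : Mv) * (b : Mv) * (R d ^ (j - 1) * U d η ^ a * V d η ^ (b - 1))) *
            (C (η i) * X (Sum.inr i)) +
          ((a : Mv) * (b : Mv) * (R d ^ j * U d η ^ (a - 1) * V d η ^ (b - 1))) *
            (C ((starRingEnd ℂ) (η i)) * C (η i)) +
          (j : Mv) * (R d ^ (j - 1) * U d η ^ a * V d η ^ b) := by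
    intro i
    simp only [map_add, pderiv_mul, pderiv_pow, pderiv_inl_U, pderiv_inr_U, pderiv_inl_V,
      pderiv_inr_V, pderiv_inl_R, pderiv_inr_R, Derivation.map_natCast, pderiv_C, pderiv_X_self,
      mul_zero, zero_mul, add_zero, zero_add, mul_one]
    ring
  rw [complexLaplacian_apply]
  rw [Finset.sum_congr rfl fun i _ => hE i]
  simp only [Finset.sum_add_distrib, ← Finset.mul_sum]
  rw [show ∑ i : Fin d, C ((starRingEnd ℂ) (η i)) * X (Sum.inl i) = U d η from rfl,
    show ∑ i : Fin d, C (η i) * X (Sum.inr i) = V d η from rfl]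
  have hC : ∑ i : Fin d, C ((starRingEnd ℂ) (η i)) * C (η i)
      = (1 : MvPolynomial (Fin d ⊕ Fin d) ℂ) := by
    rw [← map_one C, ← hη, map_sum]
    simp
  have hsw : ∑ i : Fin d, X (Sum.inl i) * (X (Sum.inr i) : MvPolynomial (Fin d ⊕ Fin d) ℂ)
      = R d := rfl
  rw [hC, hsw, Finset.sum_const, Finset.card_univ, Fintype.card_fin]
  rcases j with _ | j0
  · push_cast
    ring
  · simp only [Nat.add_sub_cancel]
    have h1 : ((j0 : MvPolynomial (Fin d ⊕ Fin d) ℂ)) * (R d ^ (j0 - 1) * R d) = ↑j0 * R d ^ j0 := by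
      cases j0 with
      | zero => simp
      | succ n => rw [Nat.add_sub_cancel, ← pow_succ]
    have h2 : ((a : MvPolynomial (Fin d ⊕ Fin d) ℂ)) * (U d η ^ (a - 1) * U d η) = ↑a * U d η ^ a := by
      cases a with
      | zero => simp
      | succ n => rw [Nat.add_sub_cancel, ← pow_succ]
    have h3 : ((b : MvPolynomial (Fin d ⊕ Fin d) ℂ)) * (V d η ^ (b - 1) * V d η) = ↑b * V d η ^ b := by
      cases b with
      | zero => simp
      | succ n => rw [Nat.add_sub_cancel, ← pow_succ]
    have e : d + a + b + (j0 + 1) - 1 = d + a + b + j0 := by omega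
    rw [e]
    push_cast [nsmul_eq_mul]
    linear_combination ((j0 : MvPolynomial (Fin d ⊕ Fin d) ℂ) + 1) * (U d η ^ a * V d η ^ b) * h1 +
      ((j0 : MvPolynomial (Fin d ⊕ Fin d) ℂ) + 1) * (R d ^ j0 * V d η ^ b) * h2 +
      ((j0 : MvPolynomial (Fin d ⊕ Fin d) ℂ) + 1) * (R d ^ j0 * U d η ^ a) * h3


lemma U_hom1 : (U d η).IsWeightedHomogeneous (w1 d) 1 := by
  apply (weightedHomogeneousSubmodule ℂ (w1 d) 1).sum_mem
  intro i _
  have := ((isWeightedHomogeneous_C (w1 d) ((starRingEnd ℂ) (η i))).mul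
    (isWeightedHomogeneous_X ℂ (w1 d) (Sum.inl i)))
  simpa [w1] using this

lemma U_hom2 : (U d η).IsWeightedHomogeneous (w2 d) 0 := by
  apply (weightedHomogeneousSubmodule ℂ (w2 d) 0).sum_mem
  intro i _
  have := ((isWeightedHomogeneous_C (w2 d) ((starRingEnd ℂ) (η i))).mul
    (isWeightedHomogeneous_X ℂ (w2 d) (Sum.inl i)))
  simpa [w2] using this

lemma V_hom1 : (V d η).IsWeightedHomogeneous (w1 d) 0 := by
  apply (weightedHomogeneousSubmodule ℂ (w1 d) 0).sum_mem
  intro i _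
  have := ((isWeightedHomogeneous_C (w1 d) (η i)).mul
    (isWeightedHomogeneous_X ℂ (w1 d) (Sum.inr i)))
  simpa [w1] using this

lemma V_hom2 : (V d η).IsWeightedHomogeneous (w2 d) 1 := by
  apply (weightedHomogeneousSubmodule ℂ (w2 d) 1).sum_mem
  intro i _
  have := ((isWeightedHomogeneous_C (w2 d) (η i)).mul
    (isWeightedHomogeneous_X ℂ (w2 d) (Sum.inr i)))
  simpa [w2] using this

lemma R_hom1 : (R d).IsWeightedHomogeneous (w1 d) 1 := by
  apply (weightedHomogeneousSubmodule ℂ (w1 d) 1).sum_mem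
  intro i _
  have := ((isWeightedHomogeneous_X ℂ (w1 d) (Sum.inl i)).mul
    (isWeightedHomogeneous_X ℂ (w1 d) (Sum.inr i)))
  simpa [w1] using this

lemma R_hom2 : (R d).IsWeightedHomogeneous (w2 d) 1 := by
  apply (weightedHomogeneousSubmodule ℂ (w2 d) 1).sum_mem
  intro i _
  have := ((isWeightedHomogeneous_X ℂ (w2 d) (Sum.inl i)).mul
    (isWeightedHomogeneous_X ℂ (w2 d) (Sum.inr i)))
  simpa [w2] using this

lemma hom_pow {w : Fin d ⊕ Fin d → ℕ} {φ : MvPolynomial (Fin d ⊕ Fin d) ℂ} {m : ℕ}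
    (h : φ.IsWeightedHomogeneous w m) (n : ℕ) : (φ ^ n).IsWeightedHomogeneous w (n * m) := by
  induction n with
  | zero => simpa using isWeightedHomogeneous_one ℂ w
  | succ k ih =>
      have := ih.mul h
      rw [pow_succ]
      convert this using 1
      ring

/-- The coefficient in the zonal harmonic / disk polynomial. -/
noncomputable def cf (d p q j : ℕ) : ℂ :=
  (Nat.factorial (d + p + q - j - 2) : ℂ) /
    ((Nat.factorial j : ℂ) * (Nat.factorial (p - j) : ℂ) * (Nat.factorial (q - j) : ℂ))

/-- The zonal polynomial of bidegree `(p,q)` with pole `η`. -/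
noncomputable def Z (d p q : ℕ) (η : Fin d → ℂ) : MvPolynomial (Fin d ⊕ Fin d) ℂ :=
  C (((p + q + d - 1 : ℕ) : ℂ) / (Nat.factorial (d - 1) : ℂ)) *
    ∑ j ∈ Finset.range (min p q + 1),
      C ((-1 : ℂ) ^ j * cf d p q j) * (R d ^ j * U d η ^ (p - j) * V d η ^ (q - j))

lemma Z_hom1 (p q : ℕ) : (Z d p q η).IsWeightedHomogeneous (w1 d) p := by
  have : (Z d p q η) ∈ weightedHomogeneousSubmodule ℂ (w1 d) p := by
    rw [Z]
    rw [show (C (((p + q + d - 1 : ℕ) : ℂ) / (Nat.factorial (d - 1) : ℂ)) :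
      MvPolynomial (Fin d ⊕ Fin d) ℂ) * _ = _ from smul_eq_C_mul _ _ |>.symm]
    apply Submodule.smul_mem
    apply Submodule.sum_mem
    intro j hj
    rw [mem_range] at hj
    rw [show (C ((-1 : ℂ) ^ j * cf d p q j) : MvPolynomial (Fin d ⊕ Fin d) ℂ) * _ = _ from
      smul_eq_C_mul _ _ |>.symm]
    apply Submodule.smul_mem
    rw [mem_weightedHomogeneousSubmodule]
    have h1 := (hom_pow d (R_hom1 d) j).mul (hom_pow d (U_hom1 d η) (p - j))
    have h2 := h1.mul (hom_pow d (V_hom1 d η) (q - j))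
    have he : j * 1 + (p - j) * 1 + (q - j) * 0 = p := by omega
    rw [mul_assoc]
    rw [← mul_assoc (R d ^ j)]
    convert h2 using 1
    omega
  exact this

lemma Z_hom2 (p q : ℕ) : (Z d p q η).IsWeightedHomogeneous (w2 d) q := by
  have : (Z d p q η) ∈ weightedHomogeneousSubmodule ℂ (w2 d) q := by
    rw [Z]
    rw [show (C (((p + q + d - 1 : ℕ) : ℂ) / (Nat.factorial (d - 1) : ℂ)) :
      MvPolynomial (Fin d ⊕ Fin d) ℂ) * _ = _ from smul_eq_C_mul _ _ |>.symm]
    apply Submodule.smul_mem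
    apply Submodule.sum_mem
    intro j hj
    rw [mem_range] at hj
    rw [show (C ((-1 : ℂ) ^ j * cf d p q j) : MvPolynomial (Fin d ⊕ Fin d) ℂ) * _ = _ from
      smul_eq_C_mul _ _ |>.symm]
    apply Submodule.smul_mem
    rw [mem_weightedHomogeneousSubmodule]
    have h1 := (hom_pow d (R_hom2 d) j).mul (hom_pow d (U_hom2 d η) (p - j))
    have h2 := h1.mul (hom_pow d (V_hom2 d η) (q - j))
    rw [mul_assoc]
    rw [← mul_assoc (R d ^ j)]
    convert h2 using 1
    omega
  exact this

end ZonalAux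

namespace ZonalAux

lemma cf_identity {d p q j : ℕ} (hd : 1 ≤ d) (hjp : j < p) (hjq : j < q) :
    ((-1 : ℂ) ^ (j + 1) * cf d p q (j + 1)) * (((j + 1) * (d + p + q - j - 2) : ℕ) : ℂ) +
      ((-1 : ℂ) ^ j * cf d p q j) * (((p - j) * (q - j) : ℕ) : ℂ) = 0 := by
  obtain ⟨a, ha⟩ : ∃ a, p - j = a + 1 := ⟨p - j - 1, by omega⟩
  obtain ⟨b, hb⟩ : ∃ b, q - j = b + 1 := ⟨q - j - 1, by omega⟩
  obtain ⟨t, ht⟩ : ∃ t, d + p + q - j - 2 = t + 1 := ⟨d + p + q - j - 3, by omega⟩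
  have h1 : d + p + q - (j + 1) - 2 = t := by omega
  have h2 : p - (j + 1) = a := by omega
  have h3 : q - (j + 1) = b := by omega
  rw [cf, cf, ha, hb, ht, h1, h2, h3, pow_succ]
  have hj : (Nat.factorial j : ℂ) ≠ 0 := Nat.cast_ne_zero.mpr (Nat.factorial_ne_zero j)
  have hA : (Nat.factorial a : ℂ) ≠ 0 := Nat.cast_ne_zero.mpr (Nat.factorial_ne_zero a)
  have hB : (Nat.factorial b : ℂ) ≠ 0 := Nat.cast_ne_zero.mpr (Nat.factorial_ne_zero b)
  rw [Nat.factorial_succ (t), Nat.factorial_succ j, Nat.factorial_succ a, Nat.factorial_succ b]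
  have hj1 : (j : ℂ) + 1 ≠ 0 := Nat.cast_add_one_ne_zero j
  have ha1 : (a : ℂ) + 1 ≠ 0 := Nat.cast_add_one_ne_zero a
  have hb1 : (b : ℂ) + 1 ≠ 0 := Nat.cast_add_one_ne_zero b
  have ht1 : (t : ℂ) + 1 ≠ 0 := Nat.cast_add_one_ne_zero t
  push_cast
  field_simp
  ring

lemma Z_harmonic (p q : ℕ) (hd : 1 ≤ d)
    (hη : (∑ i : Fin d, (starRingEnd ℂ) (η i) * η i) = 1) :
    complexLaplacian d (Z d p q η) = 0 := by
  rw [Z, show (C (((p + q + d - 1 : ℕ) : ℂ) / (Nat.factorial (d - 1) : ℂ)) :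
      MvPolynomial (Fin d ⊕ Fin d) ℂ) * _ = _ from smul_eq_C_mul _ _ |>.symm, map_smul, map_sum]
  rw [show (∑ j ∈ Finset.range (min p q + 1), complexLaplacian d
      (C ((-1 : ℂ) ^ j * cf d p q j) * (R d ^ j * U d η ^ (p - j) * V d η ^ (q - j)))) = 0
    from ?_, smul_zero]
  have hterm : ∀ j, complexLaplacian d
      (C ((-1 : ℂ) ^ j * cf d p q j) * (R d ^ j * U d η ^ (p - j) * V d η ^ (q - j))) =
      C ((-1 : ℂ) ^ j * cf d p q j * ((j * (d + (p - j) + (q - j) + j - 1) : ℕ) : ℂ)) *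
          (R d ^ (j - 1) * U d η ^ (p - j) * V d η ^ (q - j)) +
        C ((-1 : ℂ) ^ j * cf d p q j * (((p - j) * (q - j) : ℕ) : ℂ)) *
          (R d ^ j * U d η ^ (p - j - 1) * V d η ^ (q - j - 1)) := by
    intro j
    rw [← smul_eq_C_mul, map_smul, lap_term d η hη j (p - j) (q - j)]
    simp only [smul_add, smul_eq_C_mul, ← mul_assoc,
      ← map_natCast (C : ℂ →+* MvPolynomial (Fin d ⊕ Fin d) ℂ), ← map_mul]
  rw [Finset.sum_congr rfl fun j _ => hterm j, Finset.sum_add_distrib]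
  rw [Finset.sum_range_succ', Finset.sum_range_succ]
  have hA0 : C ((-1 : ℂ) ^ 0 * cf d p q 0 * ((0 * (d + (p - 0) + (q - 0) + 0 - 1) : ℕ) : ℂ)) *
      (R d ^ (0 - 1) * U d η ^ (p - 0) * V d η ^ (q - 0)) = 0 := by
    norm_num
  have hBm : C ((-1 : ℂ) ^ (min p q) * cf d p q (min p q) *
        (((p - min p q) * (q - min p q) : ℕ) : ℂ)) *
      (R d ^ (min p q) * U d η ^ (p - min p q - 1) * V d η ^ (q - min p q - 1)) = 0 := by
    have h0 : (p - min p q) * (q - min p q) = 0 := by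
      have : p - min p q = 0 ∨ q - min p q = 0 := by omega
      rcases this with h | h <;> simp [h]
    rw [h0]
    norm_num
  rw [hA0, hBm, add_zero, add_zero, ← Finset.sum_add_distrib]
  apply Finset.sum_eq_zero
  intro j hj
  rw [Finset.mem_range] at hj
  have hjp : j < p := by omega
  have hjq : j < q := by omega
  have e1 : p - (j + 1) = p - j - 1 := by omega
  have e2 : q - (j + 1) = q - j - 1 := by omega
  have e3 : (j + 1) * (d + (p - (j + 1)) + (q - (j + 1)) + (j + 1) - 1) =
      (j + 1) * (d + p + q - j - 2) := by
    have : d + (p - (j + 1)) + (q - (j + 1)) + (j + 1) - 1 = d + p + q - j - 2 := by omega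
    rw [this]
  have e4 : j + 1 - 1 = j := rfl
  rw [e3, e1, e2, e4, ← add_mul, ← map_add, cf_identity hd hjp hjq, map_zero, zero_mul]

end ZonalAux

namespace ZonalAux

variable (d : ℕ) (η : Fin d → ℂ)

noncomputable def evalAt (ξ : Fin d → ℂ) : MvPolynomial (Fin d ⊕ Fin d) ℂ →ₐ[ℂ] ℂ :=
  aeval (Sum.elim ξ (fun i => (starRingEnd ℂ) (ξ i)))

lemma evalAt_U (ξ : Fin d → ℂ) :
    evalAt d ξ (U d η) = ∑ i : Fin d, (starRingEnd ℂ) (η i) * ξ i := by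
  simp [evalAt, U]

lemma evalAt_V (ξ : Fin d → ℂ) :
    evalAt d ξ (V d η) = (starRingEnd ℂ) (∑ i : Fin d, (starRingEnd ℂ) (η i) * ξ i) := by
  simp [evalAt, V, map_sum, mul_comm]

lemma evalAt_R (ξ : Fin d → ℂ) (hξ : (∑ i : Fin d, ξ i * (starRingEnd ℂ) (ξ i)) = 1) :
    evalAt d ξ (R d) = 1 := by
  simpa [evalAt, R] using hξ

lemma Z_eval (p q : ℕ) (ξ : Fin d → ℂ)
    (hξ : (∑ i : Fin d, ξ i * (starRingEnd ℂ) (ξ i)) = 1) :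
    evalAt d ξ (Z d p q η) = Qc d p q (∑ i : Fin d, (starRingEnd ℂ) (η i) * ξ i) := by
  rw [Z, Qc, map_mul, map_sum]
  congr 1
  · simp [evalAt]
  · apply Finset.sum_congr rfl
    intro j hj
    have hC : ∀ x : ℂ, evalAt d ξ (C x) = x := by intro x; simp [evalAt]
    simp only [map_mul, map_pow, evalAt_U, evalAt_V, evalAt_R d ξ hξ, one_pow, hC, cf]
    ring

lemma Z_mem_Hpq (p q : ℕ) (hd : 1 ≤ d)
    (hη : (∑ i : Fin d, (starRingEnd ℂ) (η i) * η i) = 1) :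
    Z d p q η ∈ Hpq d p q :=
  ⟨⟨Z_hom1 d η p q, Z_hom2 d η p q⟩, Z_harmonic (d := d) (η := η) p q hd hη⟩

lemma Hpq_fd (p q : ℕ) : FiniteDimensional ℂ (Hpq d p q) := by
  apply Submodule.finiteDimensional_of_le
    (S₂ := MvPolynomial.restrictTotalDegree (Fin d ⊕ Fin d) ℂ (p + q))
  intro P hP
  rw [MvPolynomial.mem_restrictTotalDegree]
  apply Finset.sup_le
  intro m hm
  rw [MvPolynomial.mem_support_iff] at hm
  have h1 := hP.1.1 hm
  have h2 := hP.1.2 hm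
  have : (m.sum fun _ e => e) = p + q := by
    rw [← h1, ← h2, Finsupp.weight_apply, Finsupp.weight_apply, Finsupp.sum, Finsupp.sum,
      Finsupp.sum, ← Finset.sum_add_distrib]
    apply Finset.sum_congr rfl
    intro i _
    rcases i with i | i <;> simp
  omega

end ZonalAux


/-- Absolute bound: if `F = Σ_{(p,q)∈τ} f_{pq} Q_{pq}^{(d)}` (with `f_{pq} ≠ 0` exactly
on `τ`) satisfies `F(1) = 1` and annihilates all the inner products `⟨v_j,v_k⟩`,
`j ≠ k`, of unit vectors `v_1,…,v_n` in `ℂ^d`, then `n ≤ Σ_{(p,q)∈τ} dim H(p,q)`. -/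
theorem annihilator_absolute_bound (d : ℕ) (hd : 1 ≤ d)
    (τ : Finset (ℕ × ℕ)) (f : ℕ × ℕ → ℂ)
    (hsupp : ∀ pq : ℕ × ℕ, f pq ≠ 0 ↔ pq ∈ τ)
    (F : ℂ → ℂ)
    (hF : ∀ z, F z = ∑ pq ∈ τ, f pq * Qc d pq.1 pq.2 z)
    (hF1 : F 1 = 1)
    (n : ℕ) (v : Fin n → EuclideanSpace ℂ (Fin d))
    (hv : ∀ j, ‖v j‖ = 1)
    (hann : ∀ j k, j ≠ k → F (inner ℂ (v j) (v k) : ℂ) = 0) :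
    n ≤ ∑ pq ∈ τ, Module.finrank ℂ (Hpq d pq.1 pq.2) := by
  classical
  have hself : ∀ k : Fin n, (inner ℂ (v k) (v k) : ℂ) = 1 := by
    intro k
    rw [inner_self_eq_norm_sq_to_K, hv k]
    norm_num
  have hinner : ∀ j k : Fin n,
      (∑ i : Fin d, (starRingEnd ℂ) ((v j) i) * (v k) i) = (inner ℂ (v j) (v k) : ℂ) := by
    intro j k
    rw [PiLp.inner_apply]
    simp [RCLike.inner_apply, mul_comm]
  have hxi : ∀ k : Fin n, (∑ i : Fin d, (v k) i * (starRingEnd ℂ) ((v k) i)) = 1 := by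
    intro k
    rw [show (∑ i : Fin d, (v k) i * (starRingEnd ℂ) ((v k) i)) =
        ∑ i : Fin d, (starRingEnd ℂ) ((v k) i) * (v k) i from
      Finset.sum_congr rfl fun i _ => mul_comm _ _, hinner k k, hself k]
  have hη : ∀ k : Fin n, (∑ i : Fin d, (starRingEnd ℂ) ((v k) i) * (v k) i) = 1 := by
    intro k
    rw [hinner k k, hself k]
  haveI hfd : ∀ pq : {x // x ∈ τ}, FiniteDimensional ℂ (Hpq d pq.1.1 pq.1.2) :=
    fun pq => ZonalAux.Hpq_fd d pq.1.1 pq.1.2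
  let Φ : (∀ pq : {x // x ∈ τ}, Hpq d pq.1.1 pq.1.2) →ₗ[ℂ] (Fin n → ℂ) :=
    { toFun := fun P k => ∑ pq : {x // x ∈ τ},
        ZonalAux.evalAt d (v k) ((P pq : MvPolynomial (Fin d ⊕ Fin d) ℂ))
      map_add' := by
        intro P Q
        funext k
        simp [← Finset.sum_add_distrib]
      map_smul' := by
        intro c P
        funext k
        simp [Finset.mul_sum] }
  have hrange : ∀ j : Fin n, Pi.single j (1 : ℂ) ∈ LinearMap.range Φ := by
    intro j
    refine ⟨fun pq => ⟨f pq.1 • ZonalAux.Z d pq.1.1 pq.1.2 (v j),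
      Submodule.smul_mem _ _ (ZonalAux.Z_mem_Hpq d (v j) pq.1.1 pq.1.2 hd (hη j))⟩, ?_⟩
    funext k
    show (∑ pq : {x // x ∈ τ},
      ZonalAux.evalAt d (v k) (f pq.1 • ZonalAux.Z d pq.1.1 pq.1.2 (v j))) = _
    have : ∀ pq : {x // x ∈ τ},
        ZonalAux.evalAt d (v k) (f pq.1 • ZonalAux.Z d pq.1.1 pq.1.2 (v j)) =
          f pq.1 * Qc d pq.1.1 pq.1.2 (inner ℂ (v j) (v k) : ℂ) := by
      intro pq
      rw [map_smul, smul_eq_mul, ZonalAux.Z_eval d (v j) pq.1.1 pq.1.2 (v k) (hxi k), hinner]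
    rw [Finset.sum_congr rfl fun pq _ => this pq]
    rw [Finset.sum_coe_sort τ (fun pq => f pq * Qc d pq.1 pq.2 (inner ℂ (v j) (v k) : ℂ))]
    rw [← hF]
    rcases eq_or_ne j k with rfl | hne
    · rw [hself j, hF1, Pi.single_eq_same]
    · rw [hann j k hne, Pi.single_eq_of_ne (Ne.symm hne)]
  have htop : LinearMap.range Φ = ⊤ := by
    rw [eq_top_iff, ← (Pi.basisFun ℂ (Fin n)).span_eq]
    apply Submodule.span_le.mpr
    rintro _ ⟨j, rfl⟩
    rw [Pi.basisFun_apply]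
    exact hrange j
  have h1 : n = Module.finrank ℂ (Fin n → ℂ) := by
    rw [Module.finrank_pi, Fintype.card_fin]
  have h2 : Module.finrank ℂ (Fin n → ℂ) ≤
      Module.finrank ℂ (∀ pq : {x // x ∈ τ}, Hpq d pq.1.1 pq.1.2) := by
    have := LinearMap.finrank_range_le Φ
    rwa [htop, finrank_top] at this
  have h3 : Module.finrank ℂ (∀ pq : {x // x ∈ τ}, Hpq d pq.1.1 pq.1.2) =
      ∑ pq ∈ τ, Module.finrank ℂ (Hpq d pq.1 pq.2) := by
    rw [Module.finrank_pi_fintype]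
    exact Finset.sum_coe_sort τ (fun pq => Module.finrank ℂ (Hpq d pq.1 pq.2))
  omega
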